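/- Fix Φ ∈ (0, π) and let θ(x, y) = arccos((cosh l(x,y) · cosh x − cosh y)/(sinh l(x,y) · sinh x)) for x, y > 0 be the hyperbolic inner angle, where l(x, y) = arcosh(cosh x cosh y + sinh x sinh y cos Φ). If 0 < x ≤ y, then θ(x, y) ≥ θ(x, x) and θ(x, y) ≥ θ(y, y); if x ≥ y > 0, then θ(x, y) ≤ θ(x, x) and θ(x, y) ≤ θ(y, y). (Comparison principle for the hyperbolic inner angle.) -/
import Mathlib


/-- The inverse of `cosh` on `[1, ∞)`. -/
noncomputable def arcosh (x : ℝ) : ℝ := Real.log (x + Real.sqrt (x ^ 2 - 1))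

/-- The hyperbolic edge length of the two-circle configuration with radii `x, y` and
exterior intersection angle `Φ`. -/
noncomputable def hypLen (Φ x y : ℝ) : ℝ :=
  arcosh (Real.cosh x * Real.cosh y + Real.sinh x * Real.sinh y * Real.cos Φ)

/-- The hyperbolic inner angle at the vertex of radius `x` in the two-circle configuration
with radii `x, y` and exterior intersection angle `Φ`. -/
noncomputable def thetaH (Φ x y : ℝ) : ℝ :=
  Real.arccos ((Real.cosh (hypLen Φ x y) * Real.cosh x - Real.cosh y) /
    (Real.sinh (hypLen Φ x y) * Real.sinh x))

lemma cosh_arcosh' {t : ℝ} (ht : 1 ≤ t) : Real.cosh (arcosh t) = t := by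
  set s := Real.sqrt (t ^ 2 - 1) with hs
  have hs2 : s ^ 2 = t ^ 2 - 1 := Real.sq_sqrt (by nlinarith)
  have hsn : 0 ≤ s := Real.sqrt_nonneg _
  have hpos : 0 < t + s := by linarith
  have hmul : (t + s) * (t - s) = 1 := by nlinarith
  have hinv : (t + s)⁻¹ = t - s := inv_eq_of_mul_eq_one_right hmul
  rw [arcosh, Real.cosh_log hpos, hinv]; ring

lemma sinh_arcosh' {t : ℝ} (ht : 1 ≤ t) : Real.sinh (arcosh t) = Real.sqrt (t ^ 2 - 1) := by
  set s := Real.sqrt (t ^ 2 - 1) with hs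
  have hs2 : s ^ 2 = t ^ 2 - 1 := Real.sq_sqrt (by nlinarith)
  have hsn : 0 ≤ s := Real.sqrt_nonneg _
  have hpos : 0 < t + s := by linarith
  have hmul : (t + s) * (t - s) = 1 := by nlinarith
  have hinv : (t + s)⁻¹ = t - s := inv_eq_of_mul_eq_one_right hmul
  rw [arcosh, Real.sinh_log hpos, hinv]; ring

lemma sinh_pos' {x : ℝ} (hx : 0 < x) : 0 < Real.sinh x := by
  rw [← Real.sinh_zero]; exact Real.sinh_lt_sinh.mpr hx

lemma gmono {a b : ℝ} (h : a ≤ b) :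
    a / Real.sqrt (a ^ 2 + 1) ≤ b / Real.sqrt (b ^ 2 + 1) := by
  have hpa : 0 < Real.sqrt (a ^ 2 + 1) := Real.sqrt_pos.mpr (by positivity)
  have hpb : 0 < Real.sqrt (b ^ 2 + 1) := Real.sqrt_pos.mpr (by positivity)
  have ha2 : Real.sqrt (a ^ 2 + 1) ^ 2 = a ^ 2 + 1 := Real.sq_sqrt (by positivity)
  have hb2 : Real.sqrt (b ^ 2 + 1) ^ 2 = b ^ 2 + 1 := Real.sq_sqrt (by positivity)
  rw [div_le_div_iff₀ hpa hpb]
  set p := Real.sqrt (a ^ 2 + 1)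
  set q := Real.sqrt (b ^ 2 + 1)
  rcases le_or_gt 0 a with ha | ha
  · nlinarith [mul_pos hpa hpb, mul_nonneg ha hpb.le, mul_nonneg (ha.trans h) hpa.le]
  · rcases le_or_gt 0 b with hb | hb
    · have h1 : a * q ≤ 0 := mul_nonpos_of_nonpos_of_nonneg ha.le hpb.le
      have h2 : 0 ≤ b * p := mul_nonneg hb hpa.le
      linarith
    · nlinarith [mul_pos hpa hpb, mul_pos (neg_pos.mpr ha) hpb, mul_pos (neg_pos.mpr hb) hpa]

lemma arccos_anti {a b : ℝ} (h : a ≤ b) : Real.arccos b ≤ Real.arccos a := by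
  have := Real.monotone_arcsin h
  simp only [Real.arccos]
  linarith

/-- Auxiliary quantity: the inner angle satisfies `θ(x,y) = arccos (u / √(u²+1))`. -/
noncomputable def uval (Φ x y : ℝ) : ℝ :=
  (Real.sinh x * Real.cosh y + Real.cosh x * Real.sinh y * Real.cos Φ) /
    (Real.sinh y * Real.sin Φ)

lemma thetaH_eq {Φ x y : ℝ} (hΦ : Φ ∈ Set.Ioo 0 Real.pi) (hx : 0 < x) (hy : 0 < y) :
    thetaH Φ x y = Real.arccos (uval Φ x y / Real.sqrt (uval Φ x y ^ 2 + 1)) := by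
  obtain ⟨hΦ0, hΦπ⟩ := hΦ
  have hs : 0 < Real.sin Φ := Real.sin_pos_of_pos_of_lt_pi hΦ0 hΦπ
  have hsx : 0 < Real.sinh x := sinh_pos' hx
  have hsy : 0 < Real.sinh y := sinh_pos' hy
  have hcx : 0 < Real.cosh x := Real.cosh_pos x
  have hcy : 0 < Real.cosh y := Real.cosh_pos y
  have hpyth := Real.sin_sq_add_cos_sq Φ
  have hc1 : -1 < Real.cos Φ := by nlinarith
  obtain ⟨C, hC⟩ : ∃ C, C = Real.cosh x * Real.cosh y + Real.sinh x * Real.sinh y * Real.cos Φ :=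
    ⟨_, rfl⟩
  obtain ⟨N, hN⟩ : ∃ N, N = Real.sinh x * Real.cosh y + Real.cosh x * Real.sinh y * Real.cos Φ :=
    ⟨_, rfl⟩
  obtain ⟨d, hd⟩ : ∃ d, d = Real.sinh y * Real.sin Φ := ⟨_, rfl⟩
  have hdpos : 0 < d := hd ▸ mul_pos hsy hs
  have h1 := Real.cosh_sq x
  have h2 := Real.cosh_sq y
  have hC1 : 1 ≤ C := by
    have h3 := Real.one_le_cosh (x - y)
    rw [Real.cosh_sub] at h3
    nlinarith [mul_pos hsx hsy]
  have hC2 : C ^ 2 - 1 = N ^ 2 + d ^ 2 := by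
    rw [hC, hN, hd]
    linear_combination (Real.cosh y ^ 2 - Real.cos Φ ^ 2 * Real.sinh y ^ 2) * h1 + h2 -
      Real.sinh y ^ 2 * hpyth
  have hnum : C * Real.cosh x - Real.cosh y = Real.sinh x * N := by
    rw [hC, hN]
    linear_combination Real.cosh y * h1
  have hC1e : 1 ≤ Real.cosh x * Real.cosh y + Real.sinh x * Real.sinh y * Real.cos Φ := by
    rw [← hC]; exact hC1
  have hcl : Real.cosh (hypLen Φ x y) = C := by rw [hypLen, hC]; exact cosh_arcosh' hC1e
  have hsl : Real.sinh (hypLen Φ x y) = Real.sqrt (C ^ 2 - 1) := by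
    rw [hypLen, hC]; exact sinh_arcosh' hC1e
  have hsqrt : Real.sqrt (C ^ 2 - 1) = d * Real.sqrt ((N / d) ^ 2 + 1) := by
    rw [hC2]
    have he : N ^ 2 + d ^ 2 = d ^ 2 * ((N / d) ^ 2 + 1) := by field_simp
    rw [he, Real.sqrt_mul (sq_nonneg d), Real.sqrt_sq hdpos.le]
  have hu : uval Φ x y = N / d := by rw [uval, hN, hd]
  have hq : 0 < Real.sqrt ((N / d) ^ 2 + 1) := Real.sqrt_pos.mpr (by positivity)
  rw [thetaH, hcl, hsl, hnum, hsqrt, hu]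
  congr 1
  rw [div_div]
  rw [show Real.sinh x * N = N * Real.sinh x by ring,
      show d * Real.sqrt ((N / d) ^ 2 + 1) * Real.sinh x
        = (d * Real.sqrt ((N / d) ^ 2 + 1)) * Real.sinh x by ring]
  rw [mul_div_mul_right _ _ (ne_of_gt hsx)]

/-- `uval` is antitone in the second argument. -/
lemma uval_anti {Φ x y₁ y₂ : ℝ} (hΦ : Φ ∈ Set.Ioo 0 Real.pi) (hx : 0 < x) (hy₁ : 0 < y₁)
    (h : y₁ ≤ y₂) : uval Φ x y₂ ≤ uval Φ x y₁ := by
  obtain ⟨hΦ0, hΦπ⟩ := hΦ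
  have hs : 0 < Real.sin Φ := Real.sin_pos_of_pos_of_lt_pi hΦ0 hΦπ
  have hsx : 0 < Real.sinh x := sinh_pos' hx
  have hsy₁ : 0 < Real.sinh y₁ := sinh_pos' hy₁
  have hsy₂ : 0 < Real.sinh y₂ := sinh_pos' (hy₁.trans_le h)
  have hkey : 0 ≤ Real.sinh y₂ * Real.cosh y₁ - Real.cosh y₂ * Real.sinh y₁ := by
    have h0 : Real.sinh 0 ≤ Real.sinh (y₂ - y₁) := Real.sinh_le_sinh.mpr (by linarith)
    rw [Real.sinh_zero, Real.sinh_sub] at h0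
    linarith
  rw [uval, uval, div_le_div_iff₀ (mul_pos hsy₂ hs) (mul_pos hsy₁ hs)]
  nlinarith [mul_nonneg (mul_nonneg hs.le hsx.le) hkey]

/-- `uval` is monotone in the first argument (on positives). -/
lemma uval_mono {Φ a b y : ℝ} (hΦ : Φ ∈ Set.Ioo 0 Real.pi) (hy : 0 < y) (ha : 0 < a)
    (h : a ≤ b) : uval Φ a y ≤ uval Φ b y := by
  obtain ⟨hΦ0, hΦπ⟩ := hΦ
  have hs : 0 < Real.sin Φ := Real.sin_pos_of_pos_of_lt_pi hΦ0 hΦπ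
  have hsy : 0 < Real.sinh y := sinh_pos' hy
  have hpyth := Real.sin_sq_add_cos_sq Φ
  have hc1 : -1 < Real.cos Φ := by nlinarith
  have hkey : Real.sinh y * (Real.cosh b - Real.cosh a) ≤
      Real.cosh y * (Real.sinh b - Real.sinh a) := by
    have h0 : Real.sinh (a - y) ≤ Real.sinh (b - y) := Real.sinh_le_sinh.mpr (by linarith)
    rw [Real.sinh_sub, Real.sinh_sub] at h0
    linarith
  have hcab : Real.cosh a ≤ Real.cosh b := by
    rw [Real.cosh_le_cosh, abs_of_pos ha, abs_of_pos (ha.trans_le h)]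
    exact h
  have t1 : 0 ≤ Real.sin Φ * Real.sinh y *
      (Real.cosh y * (Real.sinh b - Real.sinh a) - Real.sinh y * (Real.cosh b - Real.cosh a)) :=
    mul_nonneg (mul_nonneg hs.le hsy.le) (by linarith)
  have t2 : 0 ≤ Real.sin Φ * Real.sinh y *
      ((1 + Real.cos Φ) * (Real.sinh y * (Real.cosh b - Real.cosh a))) :=
    mul_nonneg (mul_nonneg hs.le hsy.le)
      (mul_nonneg (by linarith) (mul_nonneg hsy.le (by linarith)))
  rw [uval, uval, div_le_div_iff₀ (mul_pos hsy hs) (mul_pos hsy hs)]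
  nlinarith [t1, t2]

/-- Comparison principle for the hyperbolic inner angle: for `Φ ∈ (0, π)`, if `0 < x ≤ y`
then `θ(x, y) ≥ θ(x, x)` and `θ(x, y) ≥ θ(y, y)`; if `x ≥ y > 0` then `θ(x, y) ≤ θ(x, x)`
and `θ(x, y) ≤ θ(y, y)`. -/
theorem hyperbolic_angle_comparison (Φ : ℝ) (hΦ : Φ ∈ Set.Ioo 0 Real.pi) (x y : ℝ) :
    (0 < x → x ≤ y → thetaH Φ x x ≤ thetaH Φ x y ∧ thetaH Φ y y ≤ thetaH Φ x y) ∧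
    (0 < y → y ≤ x → thetaH Φ x y ≤ thetaH Φ x x ∧ thetaH Φ x y ≤ thetaH Φ y y) := by
  constructor
  · intro hx hxy
    have hy : 0 < y := hx.trans_le hxy
    rw [thetaH_eq hΦ hx hx, thetaH_eq hΦ hx hy, thetaH_eq hΦ hy hy]
    exact ⟨arccos_anti (gmono (uval_anti hΦ hx hx hxy)),
      arccos_anti (gmono (uval_mono hΦ hy hx hxy))⟩
  · intro hy hyx
    have hx : 0 < x := hy.trans_le hyx
    rw [thetaH_eq hΦ hx hx, thetaH_eq hΦ hx hy, thetaH_eq hΦ hy hy]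
    exact ⟨arccos_anti (gmono (uval_anti hΦ hx hy hyx)),
      arccos_anti (gmono (uval_mono hΦ hy hy hyx))⟩
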